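/- Let a > 0 and b > 0. There exist constants c_1, c_2 > 0 such that for all t ∈ Z^d and all positive integers m: (1) if ‖t‖ > bm then e^{-a‖t‖} ≤ Σ_{‖x‖ ≤ bm} e^{-a(‖x‖²/m + ‖x-t‖)} ≤ c_1 e^{-c_2‖t‖}; (2) if ‖t‖ ≤ bm then e^{-a‖t‖²/m} ≤ Σ_{‖x‖ ≤ bm} e^{-a(‖x‖²/m + ‖x-t‖)} ≤ c_1 e^{-c_2‖t‖²/m}. -/

import Mathlib

/-- Euclidean norm of a lattice point of `ℤ^d`. -/
noncomputable def znorm {d : ℕ} (x : Fin d → ℤ) : ℝ :=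
  Real.sqrt (∑ i, ((x i : ℝ)) ^ 2)

namespace SumGaussianAux

noncomputable def toE {d : ℕ} (x : Fin d → ℤ) : EuclideanSpace ℝ (Fin d) :=
  WithLp.toLp 2 (fun i => (x i : ℝ))

lemma znorm_eq_norm {d : ℕ} (x : Fin d → ℤ) : znorm x = ‖toE x‖ := by
  rw [EuclideanSpace.norm_eq]
  simp [znorm, toE, Real.norm_eq_abs, sq_abs]

lemma toE_sub {d : ℕ} (x y : Fin d → ℤ) : toE (x - y) = toE x - toE y := by
  ext i; simp [toE]

lemma znorm_nonneg {d : ℕ} (x : Fin d → ℤ) : 0 ≤ znorm x := Real.sqrt_nonneg _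

lemma znorm_zero {d : ℕ} : znorm (0 : Fin d → ℤ) = 0 := by
  simp [znorm]

lemma znorm_neg {d : ℕ} (x : Fin d → ℤ) : znorm (-x) = znorm x := by
  simp [znorm]

lemma znorm_self_sub {d : ℕ} (t : Fin d → ℤ) : znorm (t - t) = 0 := by
  simp [znorm]

lemma znorm_tri {d : ℕ} (x t : Fin d → ℤ) : znorm t ≤ znorm x + znorm (x - t) := by
  rw [znorm_eq_norm, znorm_eq_norm, znorm_eq_norm, toE_sub]
  calc ‖toE t‖ = ‖toE x - (toE x - toE t)‖ := by rw [sub_sub_cancel]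
    _ ≤ ‖toE x‖ + ‖toE x - toE t‖ := norm_sub_le _ _

lemma abs_coord_le_znorm {d : ℕ} (x : Fin d → ℤ) (i : Fin d) :
    |(x i : ℝ)| ≤ znorm x := by
  rw [← Real.sqrt_sq_eq_abs]
  apply Real.sqrt_le_sqrt
  exact Finset.single_le_sum (f := fun j => ((x j : ℝ))^2)
    (fun j _ => sq_nonneg _) (Finset.mem_univ i)

lemma summable_exp_int (c : ℝ) (hc : 0 < c) :
    Summable (fun n : ℤ => Real.exp (-c * |(n : ℝ)|)) := by
  apply Summable.of_nat_of_neg <;>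
  · have h : ∀ n : ℕ, Real.exp (-c * n) = (Real.exp (-c))^n := fun n => by
      rw [← Real.exp_nat_mul]; ring_nf
    simp only [Int.cast_natCast, Int.cast_neg, abs_neg, Nat.abs_cast, h]
    exact summable_geometric_of_lt_one (Real.exp_pos _).le
      (Real.exp_lt_one_iff.2 (by linarith))

theorem summable_pi_prod (g : ℤ → ℝ) (hg : Summable g) (h0 : ∀ k, 0 ≤ g k) :
    ∀ n : ℕ, Summable (fun x : Fin n → ℤ => ∏ i, g (x i)) := by
  intro n
  induction n with
  | zero => exact summable_of_finite_support (Set.toFinite _)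
  | succ n ih =>
    have h := (hg.mul_of_nonneg ih (fun k => h0 k)
      (fun x => Finset.prod_nonneg fun i _ => h0 _))
    have heq : (fun x : Fin (n+1) → ℤ => ∏ i, g (x i)) =
        (fun p : ℤ × (Fin n → ℤ) => g p.1 * ∏ i, g (p.2 i)) ∘ (Fin.consEquiv fun _ => ℤ).symm := by
      funext x
      simp [Fin.consEquiv, Fin.prod_univ_succ, Fin.tail]
    rw [heq]
    exact ((Fin.consEquiv fun _ => ℤ).symm).summable_iff.2 h

theorem finite_ball {d : ℕ} (R : ℝ) :
    {x : Fin d → ℤ | ∀ i, |(x i : ℝ)| ≤ R}.Finite := by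
  have h : ∀ i : Fin d, {n : ℤ | |(n : ℝ)| ≤ R}.Finite := by
    intro i
    apply Set.Finite.subset (Set.finite_Icc ⌈-R⌉ ⌊R⌋)
    intro n hn
    simp only [Set.mem_setOf_eq, abs_le] at hn
    exact ⟨Int.ceil_le.2 (by exact_mod_cast hn.1), Int.le_floor.2 (by exact_mod_cast hn.2)⟩
  apply Set.Finite.subset (Set.Finite.pi h)
  intro x hx
  simp only [Set.mem_pi, Set.mem_univ, forall_true_left, Set.mem_setOf_eq]
  exact fun i => hx i

theorem summable_exp_znorm {d : ℕ} (hd : 1 ≤ d) (c : ℝ) (hc : 0 < c) :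
    Summable (fun x : Fin d → ℤ => Real.exp (-c * znorm x)) := by
  have hd1 : (1:ℝ) ≤ d := by exact_mod_cast hd
  have hd0 : (0:ℝ) < d := by linarith
  have hcd : 0 < c / d := div_pos hc hd0
  set g : ℤ → ℝ := fun k => Real.exp (-(c/d) * |(k : ℝ)|) with hgdef
  have hgsum : Summable g := summable_exp_int _ hcd
  have hg0 : ∀ k, 0 ≤ g k := fun k => Real.exp_nonneg _
  apply Summable.of_nonneg_of_le (fun _ => Real.exp_nonneg _) _ (summable_pi_prod g hgsum hg0 d)
  intro x
  have hprod : ∏ i, g (x i) = Real.exp (∑ i, -(c/d) * |(x i : ℝ)|) := by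
    rw [Real.exp_sum]
  rw [hprod, Real.exp_le_exp]
  have hsum : ∑ i, |(x i : ℝ)| ≤ d * znorm x := by
    calc ∑ i, |(x i : ℝ)| ≤ ∑ _i : Fin d, znorm x :=
          Finset.sum_le_sum fun i _ => abs_coord_le_znorm x i
      _ = d * znorm x := by simp [Finset.sum_const, mul_comm]
  have : ∑ i, -(c/d) * |(x i : ℝ)| = -(c/d) * ∑ i, |(x i : ℝ)| := by
    rw [Finset.mul_sum]
  rw [this]
  have hdne : (d:ℝ) ≠ 0 := ne_of_gt hd0
  have : (c/d) * (∑ i, |(x i : ℝ)|) ≤ (c/d) * (d * znorm x) :=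
    mul_le_mul_of_nonneg_left hsum hcd.le
  have heq : (c/d) * (d * znorm x) = c * znorm x := by
    field_simp
  rw [heq] at this
  linarith

lemma geom1 {b m T z w : ℝ} (hb : 0 < b) (hm : 0 < m) (hT : b * m < T)
    (hz0 : 0 ≤ z) (hw0 : 0 ≤ w) (htri : T - z ≤ w) :
    min (1/2) (b/4) * T ≤ z^2 / m + w := by
  have hT0 : 0 ≤ T := by nlinarith
  have hmin1 : min (1/2 : ℝ) (b/4) ≤ 1/2 := min_le_left _ _
  have hmin2 : min (1/2 : ℝ) (b/4) ≤ b/4 := min_le_right _ _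
  by_cases hc : z ≤ T / 2
  · have h1 : T / 2 ≤ w := by linarith
    have h2 : min (1/2) (b/4) * T ≤ (1/2) * T := mul_le_mul_of_nonneg_right hmin1 hT0
    have h3 : 0 ≤ z^2 / m := by positivity
    linarith
  · push_neg at hc
    have h1 : (T/2)^2 ≤ z^2 := pow_le_pow_left₀ (by positivity) hc.le 2
    have h2 : (T/2)^2 / m ≤ z^2 / m := by gcongr
    have h3 : (b/4) * T ≤ (T/2)^2 / m := by
      rw [le_div_iff₀ hm]
      nlinarith
    have h4 : min (1/2) (b/4) * T ≤ (b/4) * T := mul_le_mul_of_nonneg_right hmin2 hT0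
    linarith

lemma geom2 {b m T z w : ℝ} (hb : 0 < b) (hm : 0 < m) (hT0 : 0 ≤ T) (hT : T ≤ b * m)
    (hz0 : 0 ≤ z) (hw0 : 0 ≤ w) (htri : T - z ≤ w) :
    min (1/4) (1/(2*b)) * (T^2 / m) ≤ z^2 / m + w := by
  have hQ0 : 0 ≤ T^2 / m := by positivity
  have hmin1 : min (1/4 : ℝ) (1/(2*b)) ≤ 1/4 := min_le_left _ _
  have hmin2 : min (1/4 : ℝ) (1/(2*b)) ≤ 1/(2*b) := min_le_right _ _
  by_cases hc : T / 2 ≤ z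
  · have h1 : (T/2)^2 ≤ z^2 := pow_le_pow_left₀ (by positivity) hc 2
    have h2 : (T/2)^2 / m ≤ z^2 / m := by gcongr
    have h3 : min (1/4) (1/(2*b)) * (T^2/m) ≤ (1/4) * (T^2/m) :=
      mul_le_mul_of_nonneg_right hmin1 hQ0
    have h4 : (1/4) * (T^2/m) = (T/2)^2 / m := by ring
    linarith
  · push_neg at hc
    have h1 : T / 2 ≤ w := by linarith
    have hA : T^2 / m ≤ T * b := by
      rw [div_le_iff₀ hm]; nlinarith
    have hB : min (1/4) (1/(2*b)) * (T^2/m) ≤ (1/(2*b)) * (T^2/m) :=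
      mul_le_mul_of_nonneg_right hmin2 hQ0
    have hC : (1/(2*b)) * (T^2/m) ≤ (1/(2*b)) * (T * b) :=
      mul_le_mul_of_nonneg_left hA (by positivity)
    have hD : (1/(2*b)) * (T * b) = T / 2 := by field_simp
    have h2 : 0 ≤ z^2 / m := by positivity
    linarith

end SumGaussianAux

open SumGaussianAux

/-- Two-sided bounds for `Σ_{‖x‖ ≤ bm} e^{-a(‖x‖²/m + ‖x-t‖)}`, with constants
depending only on `a`, `b`, `d`. -/
theorem sum_gaussian_exponential_bounds
    (d : ℕ) (hd : 1 ≤ d) (a b : ℝ) (ha : 0 < a) (hb : 0 < b) :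
    ∃ c₁ c₂ : ℝ, 0 < c₁ ∧ 0 < c₂ ∧
      ∀ (t : Fin d → ℤ) (m : ℕ), 1 ≤ m →
        ((b * m < znorm t →
          Real.exp (-a * znorm t) ≤
            (∑' x : Fin d → ℤ,
              if znorm x ≤ b * m then
                Real.exp (-a * ((znorm x) ^ 2 / m + znorm (x - t))) else 0) ∧
          (∑' x : Fin d → ℤ,
              if znorm x ≤ b * m then
                Real.exp (-a * ((znorm x) ^ 2 / m + znorm (x - t))) else 0) ≤
            c₁ * Real.exp (-c₂ * znorm t)) ∧
        (znorm t ≤ b * m →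
          Real.exp (-a * (znorm t) ^ 2 / m) ≤
            (∑' x : Fin d → ℤ,
              if znorm x ≤ b * m then
                Real.exp (-a * ((znorm x) ^ 2 / m + znorm (x - t))) else 0) ∧
          (∑' x : Fin d → ℤ,
              if znorm x ≤ b * m then
                Real.exp (-a * ((znorm x) ^ 2 / m + znorm (x - t))) else 0) ≤
            c₁ * Real.exp (-c₂ * (znorm t) ^ 2 / m))) := by
  classical
  set γ : ℝ := min (min (1/4) (1/(2*b))) (min (1/2) (b/4)) with hγdef
  have hγpos : 0 < γ := by
    apply lt_min <;> apply lt_min <;> positivity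
  set c₂ : ℝ := (a/2) * γ with hc₂def
  set c₁ : ℝ := ∑' y : Fin d → ℤ, Real.exp (-(a/2) * znorm y) with hc₁def
  have ha2 : 0 < a/2 := by linarith
  have hsumC : Summable (fun y : Fin d → ℤ => Real.exp (-(a/2) * znorm y)) :=
    summable_exp_znorm hd _ ha2
  have hc₁pos : 0 < c₁ := by
    have h1 : Real.exp (-(a/2) * znorm (0 : Fin d → ℤ)) ≤ c₁ :=
      hsumC.le_tsum 0 (fun j _ => Real.exp_nonneg _)
    rw [znorm_zero] at h1
    simp only [mul_zero, Real.exp_zero] at h1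
    linarith
  have hc₂pos : 0 < c₂ := by positivity
  refine ⟨c₁, c₂, hc₁pos, hc₂pos, ?_⟩
  intro t m hm
  have hm0 : (0:ℝ) < m := by exact_mod_cast hm
  set f : (Fin d → ℤ) → ℝ := fun x =>
    if znorm x ≤ b * m then
      Real.exp (-a * ((znorm x) ^ 2 / m + znorm (x - t))) else 0 with hfdef
  have hf0 : ∀ x, 0 ≤ f x := by
    intro x; by_cases h : znorm x ≤ b * m <;> simp [hfdef, h, Real.exp_nonneg]
  -- summability of f : finite support
  have hfin : (Function.support f).Finite := by
    apply Set.Finite.subset (finite_ball (d := d) (b * m))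
    intro x hx
    simp only [Function.mem_support, hfdef] at hx
    by_cases h : znorm x ≤ b * m
    · exact fun i => (abs_coord_le_znorm x i).trans h
    · simp [h] at hx
  have hfsum : Summable f := summable_of_finite_support hfin
  -- translated comparison sum
  have hsumT : Summable (fun x : Fin d → ℤ => Real.exp (-(a/2) * znorm (x - t))) := by
    have := (Equiv.subRight t).summable_iff
      (f := fun y : Fin d → ℤ => Real.exp (-(a/2) * znorm y))
    exact this.2 hsumC
  have htsumT : (∑' x : Fin d → ℤ, Real.exp (-(a/2) * znorm (x - t))) = c₁ := by
    rw [hc₁def]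
    exact (Equiv.subRight t).tsum_eq (fun y : Fin d → ℤ => Real.exp (-(a/2) * znorm y))
  -- the main upper-bound machine
  have key : ∀ Q : ℝ, 0 ≤ Q →
      (∀ x : Fin d → ℤ, znorm x ≤ b * m →
        γ * Q ≤ (znorm x) ^ 2 / m + znorm (x - t)) →
      (∑' x, f x) ≤ c₁ * Real.exp (-c₂ * Q) := by
    intro Q hQ hE
    have hle : ∀ x, f x ≤ Real.exp (-c₂ * Q) * Real.exp (-(a/2) * znorm (x - t)) := by
      intro x
      by_cases h : znorm x ≤ b * m
      · have hE' := hE x h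
        have hEnn : 0 ≤ (znorm x) ^ 2 / m + znorm (x - t) := by
          have := znorm_nonneg (x - t); positivity
        simp only [hfdef, if_pos h]
        rw [← Real.exp_add]
        apply Real.exp_le_exp.2
        have h1 : -c₂ * Q = -(a/2) * (γ * Q) := by rw [hc₂def]; ring
        have h2 : -(a/2) * ((znorm x) ^ 2 / m + znorm (x - t)) ≤ -(a/2) * (γ * Q) := by
          have := mul_le_mul_of_nonneg_left hE' ha2.le
          linarith
        have h4 : znorm (x - t) ≤ (znorm x) ^ 2 / m + znorm (x - t) := by
          have h5 : 0 ≤ (znorm x) ^ 2 / m := by positivity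
          linarith
        have h3 : -(a/2) * ((znorm x) ^ 2 / m + znorm (x - t)) ≤ -(a/2) * znorm (x - t) := by
          have := mul_le_mul_of_nonneg_left h4 ha2.le
          linarith
        calc -a * ((znorm x) ^ 2 / m + znorm (x - t))
            = -(a/2) * ((znorm x) ^ 2 / m + znorm (x - t))
              + -(a/2) * ((znorm x) ^ 2 / m + znorm (x - t)) := by ring
          _ ≤ -(a/2) * (γ * Q) + -(a/2) * znorm (x - t) := add_le_add h2 h3
          _ = -c₂ * Q + -(a/2) * znorm (x - t) := by rw [h1]
      · have hfx : f x = 0 := by rw [hfdef]; exact if_neg h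
        rw [hfx]
        positivity
    calc (∑' x, f x) ≤ ∑' x, Real.exp (-c₂ * Q) * Real.exp (-(a/2) * znorm (x - t)) :=
          hfsum.tsum_le_tsum hle (hsumT.mul_left _)
      _ = Real.exp (-c₂ * Q) * ∑' x, Real.exp (-(a/2) * znorm (x - t)) := tsum_mul_left
      _ = c₁ * Real.exp (-c₂ * Q) := by rw [htsumT]; ring
  constructor
  · -- case ‖t‖ > bm
    intro hT
    have hT0 : 0 ≤ znorm t := znorm_nonneg t
    constructor
    · -- lower bound: term at x = 0
      have h0 : f 0 = Real.exp (-a * znorm t) := by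
        have hcond : znorm (0 : Fin d → ℤ) ≤ b * m := by
          rw [znorm_zero]; positivity
        have : znorm ((0 : Fin d → ℤ) - t) = znorm t := by
          rw [zero_sub, znorm_neg]
        rw [hfdef]
        simp only []
        rw [if_pos hcond, this, znorm_zero]
        norm_num
      calc Real.exp (-a * znorm t) = f 0 := h0.symm
        _ ≤ ∑' x, f x := hfsum.le_tsum 0 (fun j _ => hf0 j)
    · -- upper bound via key with Q = znorm t
      apply key (znorm t) hT0
      intro x hx
      have hx0 : 0 ≤ znorm x := znorm_nonneg x
      have htri : znorm t - znorm x ≤ znorm (x - t) := by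
        have := znorm_tri x t; linarith
      have hg := geom1 hb hm0 hT hx0 (znorm_nonneg (x - t)) htri
      have hγ' : γ ≤ min (1/2) (b/4) := min_le_right _ _
      have := mul_le_mul_of_nonneg_right hγ' hT0
      linarith
  · -- case ‖t‖ ≤ bm
    intro hT
    have hT0 : 0 ≤ znorm t := znorm_nonneg t
    constructor
    · -- lower bound: term at x = t
      have h0 : f t = Real.exp (-a * (znorm t)^2 / m) := by
        rw [hfdef]
        simp only []
        rw [if_pos hT, znorm_self_sub, add_zero]
        congr 1; ring
      calc Real.exp (-a * (znorm t)^2 / m) = f t := h0.symm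
        _ ≤ ∑' x, f x := hfsum.le_tsum t (fun j _ => hf0 j)
    · -- upper bound via key with Q = (znorm t)^2 / m
      have hQ : 0 ≤ (znorm t)^2 / m := by positivity
      have := key ((znorm t)^2 / m) hQ ?_
      · have heq : -c₂ * ((znorm t)^2 / m) = -c₂ * (znorm t)^2 / m := by ring
        rwa [heq] at this
      intro x hx
      have hx0 : 0 ≤ znorm x := znorm_nonneg x
      have htri : znorm t - znorm x ≤ znorm (x - t) := by
        have := znorm_tri x t; linarith
      have hg := geom2 hb hm0 hT0 hT hx0 (znorm_nonneg (x - t)) htri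
      have hγ' : γ ≤ min (1/4) (1/(2*b)) := min_le_left _ _
      have hQ0 : 0 ≤ (znorm t)^2 / m := by positivity
      have := mul_le_mul_of_nonneg_right hγ' hQ0
      linarith
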